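/- Universal approximation for quaternion-valued MLP networks with split activation: Let ψ : ℝ → ℝ be a Tauber–Wiener function such that ψ(t) → 0 as t → −∞ or ψ(t) → 0 as t → +∞, and let ψ_ℍ : ℍ → ℍ be the split activation ψ_ℍ(ξ₀ + ξ₁ i + ξ₂ j + ξ₃ k) = ψ(ξ₀) + ψ(ξ₁) i + ψ(ξ₂) j + ψ(ξ₃) k on the real quaternions ℍ. Then for every N ≥ 1, every compact set K ⊆ ℍᴺ, every continuous function f : ℍᴺ → ℍ, and every ε > 0, there exist M ∈ ℕ and quaternion parameters α_i, b_i ∈ ℍ and w_{ij} ∈ ℍ (1 ≤ i ≤ M, 1 ≤ j ≤ N) such that ‖ Σ_{i=1}^M α_i · ψ_ℍ( Σ_{j=1}^N w_{ij} · x_j + b_i ) − f(x) ‖ ≤ ε for all x = (x₁,…,x_N) ∈ K. -/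

import Mathlib

open Filter

/-- `ψ` is a Tauber–Wiener function: every continuous real function can be uniformly
approximated on every closed interval by finite linear combinations of the form
`t ↦ ∑ i, α i * ψ (w i * t + θ i)`. -/
def IsTauberWiener (ψ : ℝ → ℝ) : Prop :=
  ∀ f : ℝ → ℝ, Continuous f → ∀ a b : ℝ, ∀ ε : ℝ, 0 < ε →
    ∃ M : ℕ, ∃ α w θ : Fin M → ℝ,
      ∀ t ∈ Set.Icc a b, |f t - ∑ i, α i * ψ (w i * t + θ i)| ≤ ε

namespace UAQMLP

noncomputable section

open scoped Quaternion

/-! ### Stone–Weierstrass density of spans of exponentials of linear functionals -/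

section ExpDense
variable {E : Type*} [NormedAddCommGroup E] [NormedSpace ℝ E] [FiniteDimensional ℝ E]

/-- The exp of a linear functional, as a continuous map on a subset. -/
noncomputable def mkExp (K : Set E) (L : E →ₗ[ℝ] ℝ) : C(K, ℝ) :=
  ⟨fun x => Real.exp (L x),
    (Real.continuous_exp.comp L.continuous_of_finiteDimensional).comp continuous_subtype_val⟩

lemma mkExp_mul (K : Set E) (L L' : E →ₗ[ℝ] ℝ) :
    mkExp K L * mkExp K L' = mkExp K (L + L') := by
  ext x
  simp [mkExp, Real.exp_add]

lemma exp_dense {K : Set E} (hK : IsCompact K) (F : E → ℝ) (hF : Continuous F)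
    {ε : ℝ} (hε : 0 < ε) :
    ∃ (n : ℕ) (c : Fin n → ℝ) (L : Fin n → E →ₗ[ℝ] ℝ),
      ∀ x ∈ K, |F x - ∑ i, c i * Real.exp (L i x)| ≤ ε := by
  haveI : CompactSpace K := isCompact_iff_compactSpace.mp hK
  set p : Submodule ℝ C(K, ℝ) := Submodule.span ℝ (Set.range (mkExp K)) with hp
  have h1 : (1 : C(K, ℝ)) ∈ p := by
    apply Submodule.subset_span
    exact ⟨0, by ext x; simp [mkExp]⟩
  have hmul : ∀ x y : C(K, ℝ), x ∈ p → y ∈ p → x * y ∈ p := by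
    intro x y hx hy
    have h2 : x * y ∈ p * p := Submodule.mul_mem_mul hx hy
    rw [hp, Submodule.span_mul_span] at h2
    refine Submodule.span_le.mpr ?_ h2
    rw [Set.mul_subset_iff]
    rintro _ ⟨L, rfl⟩ _ ⟨L', rfl⟩
    rw [mkExp_mul]
    exact Submodule.subset_span ⟨L + L', rfl⟩
  set A : Subalgebra ℝ C(K, ℝ) := p.toSubalgebra h1 hmul with hA
  have hsep : A.SeparatesPoints := by
    intro x y hxy
    obtain ⟨f, hf⟩ := SeparatingDual.exists_separating_of_ne (R := ℝ)
      (Subtype.coe_injective.ne hxy)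
    refine ⟨_, ⟨mkExp K (f : E →ₗ[ℝ] ℝ), Submodule.subset_span ⟨_, rfl⟩, rfl⟩, ?_⟩
    simp only [mkExp, ContinuousMap.coe_mk]
    exact fun h => hf (Real.exp_injective h)
  obtain ⟨g, hg⟩ := ContinuousMap.exists_mem_subalgebra_near_continuous_of_separatesPoints
    A hsep (fun x : K => F x) (hF.comp continuous_subtype_val) ε hε
  have hgp : (g : C(K, ℝ)) ∈ p := g.2
  rw [Submodule.mem_span_set'] at hgp
  obtain ⟨n, cc, gg, hsum⟩ := hgp
  choose L hL using fun i => (gg i).2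
  refine ⟨n, cc, L, fun x hx => ?_⟩
  have := hg ⟨x, hx⟩
  rw [Real.norm_eq_abs] at this
  have hval : (g : C(K, ℝ)) ⟨x, hx⟩ = ∑ i, cc i * Real.exp (L i x) := by
    rw [← hsum, ContinuousMap.sum_apply]
    congr 1
    ext i
    rw [← hL i]
    simp [mkExp]
  rw [hval] at this
  rw [abs_sub_comm]
  exact this.le

/-! ### One-layer ψ-networks approximate continuous functions -/

lemma psi_net {ψ : ℝ → ℝ} (hTW : IsTauberWiener ψ)
    {K : Set E} (hK : IsCompact K) (F : E → ℝ) (hF : Continuous F)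
    {ε : ℝ} (hε : 0 < ε) :
    ∃ (ι : Type) (_ : Fintype ι) (a : ι → ℝ) (L : ι → E →ₗ[ℝ] ℝ) (θ : ι → ℝ),
      ∀ x ∈ K, |F x - ∑ i, a i * ψ (L i x + θ i)| ≤ ε := by
  obtain ⟨n, c, L, hcL⟩ := exp_dense hK F hF (half_pos hε)
  have hbd : ∀ i : Fin n, ∃ C : ℝ, ∀ x ∈ K, |L i x| ≤ C := by
    intro i
    obtain ⟨C, hC⟩ := hK.exists_bound_of_continuousOn
      ((L i).continuous_of_finiteDimensional.continuousOn)
    exact ⟨C, fun x hx => hC x hx⟩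
  choose C hC using hbd
  have hε' : (0:ℝ) < ε / (2 * (n + 1)) := by positivity
  have happrox : ∀ i : Fin n, ∃ M : ℕ, ∃ α w θ : Fin M → ℝ,
      ∀ t ∈ Set.Icc (-(C i)) (C i),
        |c i * Real.exp t - ∑ k, α k * ψ (w k * t + θ k)| ≤ ε / (2 * (n + 1)) := by
    intro i
    exact hTW (fun t => c i * Real.exp t) (continuous_const.mul Real.continuous_exp)
      (-(C i)) (C i) _ hε'
  choose M α w θ hM using happrox
  refine ⟨(i : Fin n) × Fin (M i), inferInstance,
    fun p => α p.1 p.2, fun p => w p.1 p.2 • L p.1, fun p => θ p.1 p.2, fun x hx => ?_⟩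
  have hsum : ∑ p : (i : Fin n) × Fin (M i), α p.1 p.2 * ψ ((w p.1 p.2 • L p.1) x + θ p.1 p.2)
      = ∑ i : Fin n, ∑ k : Fin (M i), α i k * ψ (w i k * (L i x) + θ i k) := by
    rw [Finset.sum_sigma']
    rfl
  rw [hsum]
  have key : ∀ i : Fin n,
      |c i * Real.exp (L i x) - ∑ k, α i k * ψ (w i k * (L i x) + θ i k)| ≤ ε / (2 * (n + 1)) := by
    intro i
    exact hM i (L i x) (abs_le.mp (hC i x hx))
  calc |F x - ∑ i : Fin n, ∑ k, α i k * ψ (w i k * (L i x) + θ i k)|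
      ≤ |F x - ∑ i, c i * Real.exp (L i x)|
        + |∑ i, c i * Real.exp (L i x) - ∑ i : Fin n, ∑ k, α i k * ψ (w i k * (L i x) + θ i k)| :=
        abs_sub_le _ _ _
    _ ≤ ε / 2 + ∑ i : Fin n, |c i * Real.exp (L i x) - ∑ k, α i k * ψ (w i k * (L i x) + θ i k)| := by
        gcongr
        · exact hcL x hx
        · rw [← Finset.sum_sub_distrib]
          exact Finset.abs_sum_le_sum_abs _ _
    _ ≤ ε / 2 + ∑ _i : Fin n, ε / (2 * (n + 1)) := by
        gcongr with i _
        exact key i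
    _ ≤ ε := by
        rw [Finset.sum_const, Finset.card_univ, Fintype.card_fin, nsmul_eq_mul]
        have hn : (0:ℝ) < (n:ℝ) + 1 := by positivity
        have : (n : ℝ) * (ε / (2 * (n + 1))) ≤ ε / 2 := by
          rw [mul_div_assoc', div_le_div_iff₀ (by positivity) two_pos]
          nlinarith [hε.le, (Nat.cast_nonneg n : (0:ℝ) ≤ n)]
        linarith

end ExpDense

/-! ### Quaternionic toolbox -/

def qI : Quaternion ℝ := ⟨0,1,0,0⟩
def qJ : Quaternion ℝ := ⟨0,0,1,0⟩
def qK : Quaternion ℝ := ⟨0,0,0,1⟩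

lemma quat_decomp (q : Quaternion ℝ) :
    q = q.re • (1 : Quaternion ℝ) + q.imI • qI + q.imJ • qJ + q.imK • qK := by
  ext <;> simp <;> simp [qI, qJ, qK]

lemma norm_qI : ‖qI‖ = 1 := by
  have h : qI * qI = -1 := by ext <;> simp [Quaternion.re_mul, Quaternion.imI_mul, Quaternion.imJ_mul, Quaternion.imK_mul] <;> simp [qI]
  have := norm_mul qI qI
  rw [h] at this
  simp only [norm_neg, norm_one] at this
  nlinarith [norm_nonneg qI]

lemma norm_qJ : ‖qJ‖ = 1 := by
  have h : qJ * qJ = -1 := by ext <;> simp [Quaternion.re_mul, Quaternion.imI_mul, Quaternion.imJ_mul, Quaternion.imK_mul] <;> simp [qJ]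
  have := norm_mul qJ qJ
  rw [h] at this
  simp only [norm_neg, norm_one] at this
  nlinarith [norm_nonneg qJ]

lemma norm_qK : ‖qK‖ = 1 := by
  have h : qK * qK = -1 := by ext <;> simp [Quaternion.re_mul, Quaternion.imI_mul, Quaternion.imJ_mul, Quaternion.imK_mul] <;> simp [qK]
  have := norm_mul qK qK
  rw [h] at this
  simp only [norm_neg, norm_one] at this
  nlinarith [norm_nonneg qK]

lemma quat_norm_le (q : Quaternion ℝ) :
    ‖q‖ ≤ |q.re| + |q.imI| + |q.imJ| + |q.imK| := by
  calc ‖q‖ = ‖q.re • (1 : Quaternion ℝ) + q.imI • qI + q.imJ • qJ + q.imK • qK‖ := by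
        rw [← quat_decomp]
    _ ≤ ‖q.re • (1 : Quaternion ℝ) + q.imI • qI + q.imJ • qJ‖ + ‖q.imK • qK‖ := norm_add_le _ _
    _ ≤ ‖q.re • (1 : Quaternion ℝ)‖ + ‖q.imI • qI‖ + ‖q.imJ • qJ‖ + ‖q.imK • qK‖ := by
        gcongr
        exact norm_add₃_le
    _ = |q.re| + |q.imI| + |q.imJ| + |q.imK| := by
        simp [norm_smul, norm_qI, norm_qJ, norm_qK, Real.norm_eq_abs]

lemma quat_abs_comp_le (q : Quaternion ℝ) :
    |q.imI| ≤ ‖q‖ ∧ |q.imJ| ≤ ‖q‖ ∧ |q.imK| ≤ ‖q‖ := by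
  have h := Quaternion.normSq_eq_norm_mul_self q
  rw [Quaternion.normSq_def'] at h
  refine ⟨?_, ?_, ?_⟩ <;>
  · rw [← Real.sqrt_sq_eq_abs]
    rw [show ‖q‖ = Real.sqrt (‖q‖^2) from (Real.sqrt_sq (norm_nonneg q)).symm]
    apply Real.sqrt_le_sqrt
    nlinarith [sq_nonneg q.re, sq_nonneg q.imI, sq_nonneg q.imJ, sq_nonneg q.imK]

/-- quaternion coefficient realizing a real-linear functional on ℍ as `re (w * q)`. -/
def wcoef (l : Quaternion ℝ →ₗ[ℝ] ℝ) : Quaternion ℝ := ⟨l 1, -l qI, -l qJ, -l qK⟩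

lemma wcoef_mul_re (l : Quaternion ℝ →ₗ[ℝ] ℝ) (q : Quaternion ℝ) :
    (wcoef l * q).re = l q := by
  conv_rhs => rw [quat_decomp q]
  simp only [map_add, map_smul, smul_eq_mul]
  rw [Quaternion.re_mul]
  simp only [wcoef]
  ring

/-- weights realizing a real-linear functional on `Fin N → ℍ` as `re (∑ w j * x j)`. -/
def wvec {N : ℕ} (L : (Fin N → Quaternion ℝ) →ₗ[ℝ] ℝ) (j : Fin N) : Quaternion ℝ :=
  wcoef (L ∘ₗ LinearMap.single ℝ (fun _ => Quaternion ℝ) j)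

lemma wvec_spec {N : ℕ} (L : (Fin N → Quaternion ℝ) →ₗ[ℝ] ℝ) (x : Fin N → Quaternion ℝ) :
    (∑ j, wvec L j * x j).re = L x := by
  have hre : (∑ j, wvec L j * x j).re = ∑ j, (wvec L j * x j).re :=
    map_sum (QuaternionAlgebra.reₗ (-1 : ℝ) 0 (-1)) _ _
  rw [hre]
  have : ∀ j, (wvec L j * x j).re = L (Pi.single j (x j)) := by
    intro j
    rw [wvec, wcoef_mul_re]
    rfl
  simp_rw [this]
  rw [← map_sum]
  congr 1
  exact Finset.univ_sum_single x

/-! ### Shifting the bias to kill unwanted components -/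

lemma exists_bias {ψ : ℝ → ℝ} (hlim : Tendsto ψ atBot (nhds 0) ∨ Tendsto ψ atTop (nhds 0))
    {η : ℝ} (hη : 0 < η) (C : ℝ) :
    ∃ t : ℝ, ∀ s : ℝ, |s| ≤ C → |ψ (s + t)| ≤ η := by
  rcases hlim with h | h
  · obtain ⟨T, hT⟩ := eventually_atBot.mp (Metric.tendsto_nhds.mp h η hη)
    refine ⟨T - C, fun s hs => ?_⟩
    have h1 : s + (T - C) ≤ T := by
      have := (abs_le.mp hs).2
      linarith
    have := hT _ h1
    rw [Real.dist_eq, sub_zero] at this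
    exact this.le
  · obtain ⟨T, hT⟩ := eventually_atTop.mp (Metric.tendsto_nhds.mp h η hη)
    refine ⟨T + C, fun s hs => ?_⟩
    have h1 : T ≤ s + (T + C) := by
      have := (abs_le.mp hs).1
      linarith
    have := hT _ h1
    rw [Real.dist_eq, sub_zero] at this
    exact this.le

/-! ### Per-unit error estimate -/

lemma unit_err {ψ : ℝ → ℝ} {ψH : Quaternion ℝ → Quaternion ℝ}
    (hψH : ∀ q : Quaternion ℝ,
      (ψH q).re = ψ q.re ∧ (ψH q).imI = ψ q.imI ∧
      (ψH q).imJ = ψ q.imJ ∧ (ψH q).imK = ψ q.imK)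
    {η : ℝ} (a : ℝ) (e u : Quaternion ℝ) (he : ‖e‖ = 1)
    (h1 : |ψ u.imI| ≤ η) (h2 : |ψ u.imJ| ≤ η) (h3 : |ψ u.imK| ≤ η) :
    ‖(a • e) * ψH u - (a * ψ u.re) • e‖ ≤ 3 * |a| * η := by
  set d : Quaternion ℝ := ψH u - ψ u.re • 1 with hd
  have hid : (a • e) * ψH u - (a * ψ u.re) • e = a • (e * d) := by
    rw [hd, mul_sub, smul_sub, smul_mul_assoc]
    congr 1
    rw [mul_smul_comm, mul_one, smul_smul]
  rw [hid, norm_smul, norm_mul, he, one_mul, Real.norm_eq_abs]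
  have hdre : d.re = 0 := by
    simp [hd, (hψH u).1]
  have hdI : d.imI = ψ u.imI := by simp [hd, (hψH u).2.1]
  have hdJ : d.imJ = ψ u.imJ := by simp [hd, (hψH u).2.2.1]
  have hdK : d.imK = ψ u.imK := by simp [hd, (hψH u).2.2.2]
  have hnd : ‖d‖ ≤ 3 * η := by
    have := quat_norm_le d
    rw [hdre, hdI, hdJ, hdK] at this
    simp only [abs_zero] at this
    linarith
  calc |a| * ‖d‖ ≤ |a| * (3 * η) := by
        exact mul_le_mul_of_nonneg_left hnd (abs_nonneg a)
    _ = 3 * |a| * η := by ring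

end

end UAQMLP

open UAQMLP in
/-- Universal approximation for quaternion-valued MLP networks with split activation. -/
theorem universal_approximation_quaternion_MLP
    (ψ : ℝ → ℝ) (hTW : IsTauberWiener ψ)
    (hlim : Tendsto ψ atBot (nhds 0) ∨ Tendsto ψ atTop (nhds 0))
    (ψH : Quaternion ℝ → Quaternion ℝ)
    (hψH : ∀ q : Quaternion ℝ,
      (ψH q).re = ψ q.re ∧ (ψH q).imI = ψ q.imI ∧
      (ψH q).imJ = ψ q.imJ ∧ (ψH q).imK = ψ q.imK)
    (N : ℕ) (hN : 1 ≤ N)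
    (K : Set (Fin N → Quaternion ℝ)) (hK : IsCompact K)
    (f : (Fin N → Quaternion ℝ) → Quaternion ℝ) (hf : Continuous f)
    (ε : ℝ) (hε : 0 < ε) :
    ∃ M : ℕ, ∃ α b : Fin M → Quaternion ℝ, ∃ w : Fin M → Fin N → Quaternion ℝ,
      ∀ x ∈ K,
        ‖(∑ i, α i * ψH ((∑ j, w i j * x j) + b i)) - f x‖ ≤ ε := by
  classical
  -- component projections and quaternion basis
  let π : Fin 4 → Quaternion ℝ → ℝ :=
    ![fun q => q.re, fun q => q.imI, fun q => q.imJ, fun q => q.imK]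
  let e : Fin 4 → Quaternion ℝ := ![1, qI, qJ, qK]
  have hπcont : ∀ c, Continuous (fun x => π c (f x)) := by
    intro c
    fin_cases c
    · exact Quaternion.continuous_re.comp hf
    · exact Quaternion.continuous_imI.comp hf
    · exact Quaternion.continuous_imJ.comp hf
    · exact Quaternion.continuous_imK.comp hf
  have hnorme : ∀ c, ‖e c‖ = 1 := by
    intro c
    fin_cases c
    · exact norm_one
    · exact norm_qI
    · exact norm_qJ
    · exact norm_qK
  have hfd : ∀ q : Quaternion ℝ, q = ∑ c : Fin 4, π c q • e c := by
    intro q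
    rw [Fin.sum_univ_four]
    show q = q.re • (1 : Quaternion ℝ) + q.imI • qI + q.imJ • qJ + q.imK • qK
    exact quat_decomp q
  have hε8 : (0:ℝ) < ε / 8 := by positivity
  -- real-valued networks for each component
  have hnets : ∀ c : Fin 4, ∃ (ι : Type) (_ : Fintype ι) (a : ι → ℝ)
      (L : ι → ((Fin N → Quaternion ℝ) →ₗ[ℝ] ℝ)) (θ : ι → ℝ),
      ∀ x ∈ K, |π c (f x) - ∑ i, a i * ψ (L i x + θ i)| ≤ ε / 8 :=
    fun c => psi_net hTW hK _ (hπcont c) hε8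
  choose ι ifin a L θ hnet using hnets
  letI : ∀ c, Fintype (ι c) := ifin
  -- coefficient budget
  set S : ℝ := ∑ c : Fin 4, ∑ i : ι c, |a c i| with hS
  have hS0 : 0 ≤ S := Finset.sum_nonneg fun c _ => Finset.sum_nonneg fun i _ => abs_nonneg _
  set η : ℝ := ε / (6 * (S + 1)) with hηdef
  have hηpos : 0 < η := by positivity
  -- hidden pre-activations
  let g : (c : Fin 4) → ι c → (Fin N → Quaternion ℝ) → Quaternion ℝ :=
    fun c i x => ∑ j, wvec (L c i) j * x j
  have hgcont : ∀ c (i : ι c), Continuous (g c i) := fun c i =>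
    continuous_finset_sum _ fun j _ => continuous_const.mul (continuous_apply j)
  have hbd : ∀ c (i : ι c), ∃ C : ℝ, ∀ x ∈ K, ‖g c i x‖ ≤ C := fun c i =>
    hK.exists_bound_of_continuousOn (hgcont c i).continuousOn
  choose C hC using hbd
  choose t ht using fun c (i : ι c) => exists_bias hlim hηpos (C c i)
  let b : (c : Fin 4) → ι c → Quaternion ℝ := fun c i => ⟨θ c i, t c i, t c i, t c i⟩
  -- the final network, indexed by a sigma type
  let κ := (c : Fin 4) × ι c
  let α' : κ → Quaternion ℝ := fun p => a p.1 p.2 • e p.1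
  let w' : κ → Fin N → Quaternion ℝ := fun p => wvec (L p.1 p.2)
  let b' : κ → Quaternion ℝ := fun p => b p.1 p.2
  let eqv := Fintype.equivFin κ
  refine ⟨Fintype.card κ, α' ∘ eqv.symm, b' ∘ eqv.symm, w' ∘ eqv.symm, fun x hx => ?_⟩
  have hreindex : ∑ m : Fin (Fintype.card κ),
      (α' ∘ eqv.symm) m * ψH ((∑ j, (w' ∘ eqv.symm) m j * x j) + (b' ∘ eqv.symm) m)
      = ∑ p : κ, α' p * ψH ((∑ j, w' p j * x j) + b' p) :=
    Equiv.sum_comp eqv.symm (fun p => α' p * ψH ((∑ j, w' p j * x j) + b' p))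
  rw [hreindex]
  -- facts about each hidden unit
  have hure : ∀ c (i : ι c), ((g c i x) + b c i).re = L c i x + θ c i := by
    intro c i
    rw [Quaternion.re_add, wvec_spec]
  have hsmall : ∀ c (i : ι c),
      |ψ (((g c i x) + b c i).imI)| ≤ η ∧ |ψ (((g c i x) + b c i).imJ)| ≤ η ∧
      |ψ (((g c i x) + b c i).imK)| ≤ η := by
    intro c i
    obtain ⟨hI, hJ, hKK⟩ := quat_abs_comp_le (g c i x)
    have hCb := hC c i x hx
    refine ⟨?_, ?_, ?_⟩
    · exact ht c i _ (hI.trans hCb)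
    · exact ht c i _ (hJ.trans hCb)
    · exact ht c i _ (hKK.trans hCb)
  -- per-unit error bound
  have hunit : ∀ c (i : ι c),
      ‖(a c i • e c) * ψH ((g c i x) + b c i) - (a c i * ψ (L c i x + θ c i)) • e c‖
        ≤ 3 * |a c i| * η := by
    intro c i
    obtain ⟨hI, hJ, hKK⟩ := hsmall c i
    have := unit_err hψH (a c i) (e c) ((g c i x) + b c i) (hnorme c) hI hJ hKK
    rwa [hure c i] at this
  -- split the sigma sum into components
  have hsigma : ∑ p : κ, α' p * ψH ((∑ j, w' p j * x j) + b' p)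
      = ∑ c : Fin 4, ∑ i : ι c, (a c i • e c) * ψH ((g c i x) + b c i) := by
    rw [Finset.sum_sigma']
    rfl
  rw [hsigma]
  -- decompose f x
  rw [show f x = ∑ c : Fin 4, π c (f x) • e c from hfd (f x)]
  rw [← Finset.sum_sub_distrib]
  -- per-component estimate
  have hcomp : ∀ c : Fin 4,
      ‖(∑ i : ι c, (a c i • e c) * ψH ((g c i x) + b c i)) - π c (f x) • e c‖
        ≤ 3 * η * (∑ i : ι c, |a c i|) + ε / 8 := by
    intro c
    have hsplit : (∑ i : ι c, (a c i • e c) * ψH ((g c i x) + b c i)) - π c (f x) • e c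
        = (∑ i : ι c, ((a c i • e c) * ψH ((g c i x) + b c i)
            - (a c i * ψ (L c i x + θ c i)) • e c))
          + ((∑ i : ι c, a c i * ψ (L c i x + θ c i)) - π c (f x)) • e c := by
      rw [Finset.sum_sub_distrib, sub_smul, ← Finset.sum_smul]
      abel
    rw [hsplit]
    calc ‖_ + _‖ ≤ ‖∑ i : ι c, ((a c i • e c) * ψH ((g c i x) + b c i)
            - (a c i * ψ (L c i x + θ c i)) • e c)‖
          + ‖((∑ i : ι c, a c i * ψ (L c i x + θ c i)) - π c (f x)) • e c‖ := norm_add_le _ _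
      _ ≤ (∑ i : ι c, 3 * |a c i| * η)
          + |(∑ i : ι c, a c i * ψ (L c i x + θ c i)) - π c (f x)| * 1 := by
          gcongr
          · exact (norm_sum_le _ _).trans (Finset.sum_le_sum fun i _ => hunit c i)
          · rw [norm_smul, Real.norm_eq_abs, hnorme c]
      _ ≤ 3 * η * (∑ i : ι c, |a c i|) + ε / 8 := by
          rw [mul_one]
          have e1 : (∑ i : ι c, 3 * |a c i| * η) = 3 * η * (∑ i : ι c, |a c i|) := by
            rw [Finset.mul_sum]
            exact Finset.sum_congr rfl fun i _ => by ring
          have e2 : |(∑ i : ι c, a c i * ψ (L c i x + θ c i)) - π c (f x)| ≤ ε / 8 := by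
            rw [abs_sub_comm]
            exact hnet c x hx
          rw [e1]
          linarith
  -- sum over the four components
  have hfinal : ‖∑ c : Fin 4, ((∑ i : ι c, (a c i • e c) * ψH ((g c i x) + b c i))
      - π c (f x) • e c)‖ ≤ ε := by
    calc ‖∑ c : Fin 4, ((∑ i : ι c, (a c i • e c) * ψH ((g c i x) + b c i))
        - π c (f x) • e c)‖
        ≤ ∑ c : Fin 4, ‖(∑ i : ι c, (a c i • e c) * ψH ((g c i x) + b c i))
          - π c (f x) • e c‖ := norm_sum_le _ _
      _ ≤ ∑ c : Fin 4, (3 * η * (∑ i : ι c, |a c i|) + ε / 8) :=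
          Finset.sum_le_sum fun c _ => hcomp c
      _ = 3 * η * S + 4 * (ε / 8) := by
          rw [Finset.sum_add_distrib, hS, Finset.mul_sum]
          simp
      _ ≤ ε := by
          have h1 : η * (S + 1) = ε / 6 := by
            rw [hηdef]
            field_simp
          have h2 : η * S ≤ η * (S + 1) := by nlinarith
          nlinarith
  exact hfinal
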